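/- arXiv:2106.10172 — 2 statements merged into one kernel-verified Lean document; each statement's English description precedes it below -/
import Mathlib

section
/- Let G be a countable group and K ≤ G a subgroup. In the weak* topology on Borel probability measures on Sub(G), the intersectional IRSs λ_{p,K} satisfy: λ_{p,K} → δ_{Core_∅(K)} as p → 0, and λ_{p,K} → δ_{Core_G(K)} as p → 1. -/
open Filter MeasureTheory
open scoped ENNReal Topology

noncomputable section

namespace Paper

variable {G : Type*} [Group G]

/-- Conjugation on subgroups: `conjSubgroup g K = g K g⁻¹`. -/
def conjSubgroup (g : G) (K : Subgroup G) : Subgroup G :=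
  K.map (MulAut.conj g).toMonoidHom

lemma mem_conjSubgroup {g x : G} {K : Subgroup G} :
    x ∈ conjSubgroup g K ↔ g⁻¹ * x * g ∈ K := by
  constructor
  · rintro ⟨y, hy, rfl⟩
    simpa [MulAut.conj_apply, mul_assoc] using hy
  · intro h
    exact ⟨g⁻¹ * x * g, h, by simp [MulAut.conj_apply]; group⟩

lemma conjSubgroup_conjSubgroup (a b : G) (K : Subgroup G) :
    conjSubgroup a (conjSubgroup b K) = conjSubgroup (a * b) K := by
  ext x
  simp only [mem_conjSubgroup]
  have e : b⁻¹ * (a⁻¹ * x * a) * b = (a * b)⁻¹ * x * (a * b) := by group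
  rw [e]

lemma conjSubgroup_eq_of_mem_normalizer {n : G} {K : Subgroup G}
    (hn : n ∈ Subgroup.normalizer (K : Set G)) : conjSubgroup n K = K := by
  ext x
  rw [mem_conjSubgroup]
  exact (Subgroup.mem_normalizer_iff''.mp hn x).symm

/-- `Θ = Θ_G(K)`: the set of right cosets of the normalizer of `K` in `G`. -/
abbrev NormCoset (K : Subgroup G) := Quotient (QuotientGroup.rightRel (Subgroup.normalizer (K : Set G)))

/-- The conjugate `K^θ = g⁻¹ K g` for `θ = N_G(K)·g ∈ Θ` (it does not depend on the
chosen representative of the coset). -/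
def conjCoset (K : Subgroup G) (θ : NormCoset K) : Subgroup G :=
  conjSubgroup θ.out⁻¹ K

lemma conjSubgroup_inv_eq_of_rel {a b : G} {K : Subgroup G}
    (h : QuotientGroup.rightRel (Subgroup.normalizer (K : Set G)) a b) :
    conjSubgroup a⁻¹ K = conjSubgroup b⁻¹ K := by
  rw [QuotientGroup.rightRel_apply] at h
  have e : conjSubgroup a⁻¹ K = conjSubgroup (b⁻¹ * (b * a⁻¹)) K := by
    congr 1; group
  rw [e, ← conjSubgroup_conjSubgroup, conjSubgroup_eq_of_mem_normalizer h]

lemma conjCoset_mk (K : Subgroup G) (a : G) :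
    conjCoset K (Quotient.mk (QuotientGroup.rightRel (Subgroup.normalizer (K : Set G))) a) =
      conjSubgroup a⁻¹ K := by
  apply conjSubgroup_inv_eq_of_rel
  exact Quotient.mk_out (s := QuotientGroup.rightRel (Subgroup.normalizer (K : Set G))) a

/-- The right action of `G` on `Θ`. -/
def shift (K : Subgroup G) (θ : NormCoset K) (g : G) : NormCoset K :=
  Quotient.mk (QuotientGroup.rightRel (Subgroup.normalizer (K : Set G))) (θ.out * g)

lemma rel_mul {K : Subgroup G} {a b : G} (h : QuotientGroup.rightRel (Subgroup.normalizer (K : Set G)) a b)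
    (g : G) : QuotientGroup.rightRel (Subgroup.normalizer (K : Set G)) (a * g) (b * g) := by
  rw [QuotientGroup.rightRel_apply] at h ⊢
  have e : b * g * (a * g)⁻¹ = b * a⁻¹ := by group
  rw [e]; exact h

lemma shift_mk (K : Subgroup G) (a g : G) :
    shift K (Quotient.mk (QuotientGroup.rightRel (Subgroup.normalizer (K : Set G))) a) g =
      Quotient.mk (QuotientGroup.rightRel (Subgroup.normalizer (K : Set G))) (a * g) := by
  apply Quotient.sound
  exact rel_mul (Quotient.mk_out (s := QuotientGroup.rightRel (Subgroup.normalizer (K : Set G))) a) g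

lemma shift_shift (K : Subgroup G) (θ : NormCoset K) (g h : G) :
    shift K (shift K θ g) h = shift K θ (g * h) := by
  induction θ using Quotient.inductionOn with
  | h a => rw [shift_mk, shift_mk, shift_mk, mul_assoc]

lemma shift_one (K : Subgroup G) (θ : NormCoset K) : shift K θ 1 = θ := by
  induction θ using Quotient.inductionOn with
  | h a => rw [shift_mk, mul_one]

lemma shift_injective (K : Subgroup G) (g : G) :
    Function.Injective (fun θ : NormCoset K => shift K θ g) := by
  intro θ₁ θ₂ h
  have h2 := congrArg (fun θ : NormCoset K => shift K θ g⁻¹) h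
  simpa [shift_shift, shift_one] using h2

lemma conjCoset_shift (K : Subgroup G) (θ : NormCoset K) (g : G) :
    conjCoset K (shift K θ g) = conjSubgroup g⁻¹ (conjCoset K θ) := by
  induction θ using Quotient.inductionOn with
  | h a =>
    rw [shift_mk, conjCoset_mk, conjCoset_mk, conjSubgroup_conjSubgroup]
    congr 1
    group

/-- `‖g‖_K = #{θ ∈ Θ : g ∉ K^θ} ∈ ℕ ∪ {∞}`. -/
def normOf (K : Subgroup G) (g : G) : ℕ∞ :=
  {θ : NormCoset K | g ∉ conjCoset K θ}.encard

/-- `Core_∅(K) = {g : ‖g‖_K < ∞}`, as a subgroup of `G`. -/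
def emptyCore (K : Subgroup G) : Subgroup G where
  carrier := {g | normOf K g < ⊤}
  one_mem' := by
    have h : {θ : NormCoset K | (1 : G) ∉ conjCoset K θ} = ∅ := by
      ext θ; simp [Subgroup.one_mem]
    simp [normOf, Set.mem_setOf_eq, h]
  mul_mem' := by
    intro a b ha hb
    simp only [Set.mem_setOf_eq, normOf] at ha hb ⊢
    have hsub : {θ : NormCoset K | a * b ∉ conjCoset K θ} ⊆
        {θ : NormCoset K | a ∉ conjCoset K θ} ∪ {θ : NormCoset K | b ∉ conjCoset K θ} := by
      intro θ hθ
      by_contra hc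
      simp only [Set.mem_union, Set.mem_setOf_eq, not_or, not_not] at hc
      exact hθ (mul_mem hc.1 hc.2)
    calc {θ : NormCoset K | a * b ∉ conjCoset K θ}.encard
        ≤ ({θ : NormCoset K | a ∉ conjCoset K θ} ∪
            {θ : NormCoset K | b ∉ conjCoset K θ}).encard := Set.encard_mono hsub
      _ ≤ _ + _ := Set.encard_union_le _ _
      _ < ⊤ := WithTop.add_lt_top.mpr ⟨ha, hb⟩
  inv_mem' := by
    intro a ha
    have h : {θ : NormCoset K | a⁻¹ ∉ conjCoset K θ} =
        {θ : NormCoset K | a ∉ conjCoset K θ} := by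
      ext θ; simp
    simpa only [Set.mem_setOf_eq, normOf, h] using ha

lemma mem_emptyCore {K : Subgroup G} {g : G} :
    g ∈ emptyCore K ↔ normOf K g < ⊤ := Iff.rfl

/-- `Core_∅(K)` is a normal subgroup of `G`. -/
instance emptyCore_normal (K : Subgroup G) : (emptyCore K).Normal := by
  constructor
  intro n hn g
  rw [mem_emptyCore] at hn ⊢
  rw [normOf, Set.encard_lt_top_iff] at hn ⊢
  have hset : {θ : NormCoset K | g * n * g⁻¹ ∉ conjCoset K θ} =
      (fun θ : NormCoset K => shift K θ g) ⁻¹' {θ : NormCoset K | n ∉ conjCoset K θ} := by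
    ext θ
    simp only [Set.mem_setOf_eq, Set.mem_preimage, conjCoset_shift, mem_conjSubgroup]
    have e : g⁻¹⁻¹ * n * g⁻¹ = g * n * g⁻¹ := by group
    rw [e]
  rw [hset]
  exact Set.Finite.preimage (Set.injOn_of_injective (shift_injective K g)) hn

variable {G₀ : Type*} [Group G₀]

/-- The Borel σ-algebra of the Chabauty topology on the space of subgroups of a
countable group: it is generated by the sets `{K : g ∈ K}`, `g ∈ G`. -/
instance subgroupMeasurableSpace : MeasurableSpace (Subgroup G₀) :=
  MeasurableSpace.generateFrom {s | ∃ g : G₀, s = {K : Subgroup G₀ | g ∈ K}}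

/-- A probability space carrying a product-Bernoulli(`p`) random subset of
`Θ = Θ_G(K)`, encoded by independent `{0,1}`-valued random variables `X θ` with
`P[X θ = 1] = p`. -/
structure BernoulliSetup {G : Type*} [Group G] (K : Subgroup G) (p : ℝ) where
  Ω : Type
  mΩ : MeasurableSpace Ω
  P : @Measure Ω mΩ
  prob : @IsProbabilityMeasure Ω mΩ P
  X : NormCoset K → Ω → Bool
  meas : ∀ θ, @Measurable Ω Bool mΩ _ (X θ)
  bernoulli : ∀ θ, P {ω | X θ ω = true} = ENNReal.ofReal p
  indep : @ProbabilityTheory.iIndepFun Ω (NormCoset K) mΩ (fun _ => Bool)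
    (fun _ => inferInstance) X P

/-- The law of the intersectional random subgroup
`Core_A(K) = ⋂_{θ ∈ A} K^θ`, where `A = {θ : X θ = 1}` is the Bernoulli-`p` random
subset of `Θ` encoded by the setup `s`. -/
def BernoulliSetup.law {G : Type*} [Group G] {K : Subgroup G} {p : ℝ}
    (s : BernoulliSetup K p) : Measure (Subgroup G) :=
  @Measure.map s.Ω (Subgroup G) s.mΩ _ (fun ω => ⨅ θ ∈ {θ | s.X θ ω = true}, conjCoset K θ) s.P

/-- `ν` is the intersectional IRS `λ_{p,K}`: the law of `Core_A(K)` for a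
product-Bernoulli(`p`) random subset `A ⊆ Θ`. -/
def IsIntersectionalIRS {G : Type*} [Group G] (K : Subgroup G) (p : ℝ)
    (ν : Measure (Subgroup G)) : Prop :=
  IsProbabilityMeasure ν ∧ ∃ s : BernoulliSetup K p, ν = s.law

/-- The Chabauty topology on the space of subgroups of a countable (discrete) group:
pointwise convergence of indicator functions. -/
instance chabautyTopology {G : Type*} [Group G] : TopologicalSpace (Subgroup G) :=
  TopologicalSpace.generateFrom
    {s | ∃ g : G, s = {K : Subgroup G | g ∈ K} ∨ s = {K : Subgroup G | g ∉ K}}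

/-! ### Auxiliary material for the proof -/

section AuxProof

variable {G' : Type*} [Group G']

/-- The random subgroup `Core_A(K)` as a function of the sample point. -/
def Hfun {K : Subgroup G'} {p : ℝ} (s : BernoulliSetup K p) (ω : s.Ω) : Subgroup G' :=
  ⨅ θ ∈ {θ | s.X θ ω = true}, conjCoset K θ

lemma law_eq_map {K : Subgroup G'} {p : ℝ} (s : BernoulliSetup K p) :
    s.law = @Measure.map s.Ω (Subgroup G') s.mΩ _ (Hfun s) s.P := rfl

lemma mem_Hfun {K : Subgroup G'} {p : ℝ} {s : BernoulliSetup K p} {ω : s.Ω} {g : G'} :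
    g ∈ Hfun s ω ↔ ∀ θ, s.X θ ω = true → g ∈ conjCoset K θ := by
  simp [Hfun, Subgroup.mem_iInf]

lemma measurableSet_memSub (g : G') : MeasurableSet {K : Subgroup G' | g ∈ K} :=
  MeasurableSpace.measurableSet_generateFrom ⟨g, rfl⟩

lemma measurableSet_subbasic {t : Set (Subgroup G')}
    (h : ∃ g : G', t = {K : Subgroup G' | g ∈ K} ∨ t = {K : Subgroup G' | g ∉ K}) :
    MeasurableSet t := by
  obtain ⟨g, rfl | rfl⟩ := h
  · exact measurableSet_memSub g
  · have := (measurableSet_memSub g).compl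
    simpa [Set.compl_setOf] using this

lemma chabauty_subbasis_countable [Countable G'] :
    Set.Countable {s : Set (Subgroup G') |
      ∃ g : G', s = {K : Subgroup G' | g ∈ K} ∨ s = {K : Subgroup G' | g ∉ K}} := by
  have hsub : {s : Set (Subgroup G') |
      ∃ g : G', s = {K : Subgroup G' | g ∈ K} ∨ s = {K : Subgroup G' | g ∉ K}} ⊆
      Set.range (fun g : G' => {K : Subgroup G' | g ∈ K}) ∪
      Set.range (fun g : G' => {K : Subgroup G' | g ∉ K}) := by
    rintro s ⟨g, h | h⟩
    exacts [Or.inl ⟨g, h.symm⟩, Or.inr ⟨g, h.symm⟩]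
  exact ((Set.countable_range _).union (Set.countable_range _)).mono hsub

lemma chabauty_basis :
    TopologicalSpace.IsTopologicalBasis
      ((fun f : Set (Set (Subgroup G')) => ⋂₀ f) '' { f : Set (Set (Subgroup G')) | f.Finite ∧
        f ⊆ {s | ∃ g : G', s = {K : Subgroup G' | g ∈ K} ∨ s = {K : Subgroup G' | g ∉ K}} }) :=
  TopologicalSpace.isTopologicalBasis_of_subbasis rfl

lemma measurableSet_of_isOpen [Countable G'] {U : Set (Subgroup G')} (hU : IsOpen U) :
    MeasurableSet U := by
  obtain ⟨S, hSb, rfl⟩ := chabauty_basis.open_eq_sUnion hU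
  have hScount : S.Countable := by
    refine Set.Countable.mono hSb ?_
    exact ((Set.countable_setOf_finite_subset chabauty_subbasis_countable).image _)
  refine MeasurableSet.sUnion hScount fun t ht => ?_
  obtain ⟨F, ⟨hFfin, hFsub⟩, rfl⟩ := hSb ht
  exact hFfin.measurableSet_sInter fun u hu => measurableSet_subbasic (hFsub hu)

lemma measurable_of_continuous [Countable G'] {f : Subgroup G' → ℝ} (hf : Continuous f) :
    Measurable f := by
  rw [BorelSpace.measurable_eq (α := ℝ)]
  exact measurable_generateFrom fun t ht => measurableSet_of_isOpen (ht.preimage hf)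

lemma measurable_Hfun [Countable G'] {K : Subgroup G'} {p : ℝ} (s : BernoulliSetup K p) :
    @Measurable s.Ω (Subgroup G') s.mΩ _ (Hfun s) := by
  letI := s.mΩ
  apply measurable_generateFrom
  rintro t ⟨g, rfl⟩
  have hset : Hfun s ⁻¹' {K' : Subgroup G' | g ∈ K'} =
      ⋂ θ, {ω | s.X θ ω = true → g ∈ conjCoset K θ} := by
    ext ω
    simp [mem_Hfun]
  rw [hset]
  refine MeasurableSet.iInter fun θ => ?_
  by_cases hg : g ∈ conjCoset K θ
  · simp only [hg, implies_true, Set.setOf_true]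
    exact MeasurableSet.univ
  · have hset2 : {ω | s.X θ ω = true → g ∈ conjCoset K θ} = s.X θ ⁻¹' {false} := by
      ext ω
      cases h : s.X θ ω <;> simp [h, hg]
    rw [hset2]
    exact s.meas θ (measurableSet_singleton false)

lemma prob_X_false {K : Subgroup G'} {p : ℝ} (s : BernoulliSetup K p) (θ : NormCoset K) :
    s.P (s.X θ ⁻¹' {false}) = 1 - ENNReal.ofReal p := by
  letI := s.mΩ; haveI := s.prob
  have h1 : s.X θ ⁻¹' {false} = (s.X θ ⁻¹' {true})ᶜ := by
    ext ω; cases h : s.X θ ω <;> simp [h]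
  have h2 : s.X θ ⁻¹' {true} = {ω | s.X θ ω = true} := by ext ω; simp
  rw [h1, measure_compl ((s.meas θ) (measurableSet_singleton true)) (measure_ne_top _ _),
    h2, s.bernoulli, measure_univ]

lemma prob_mem_zero {K : Subgroup G'} {p : ℝ} (s : BernoulliSetup K p) (hp0 : 0 < p)
    {g : G'} (hg : {θ : NormCoset K | g ∉ conjCoset K θ}.Infinite) :
    s.P {ω | g ∈ Hfun s ω} = 0 := by
  letI := s.mΩ; haveI := s.prob
  set q : ℝ≥0∞ := 1 - ENNReal.ofReal p with hq
  have hq1 : q < 1 :=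
    ENNReal.sub_lt_self ENNReal.one_ne_top one_ne_zero (ENNReal.ofReal_pos.mpr hp0).ne'
  have key : ∀ N : ℕ, s.P {ω | g ∈ Hfun s ω} ≤ q ^ N := by
    intro N
    set e : ℕ ↪ NormCoset K :=
      (hg.natEmbedding _).trans (Function.Embedding.subtype _) with he
    have heB : ∀ i, g ∉ conjCoset K (e i) := fun i => ((hg.natEmbedding _) i).2
    set T : Finset (NormCoset K) := (Finset.range N).map e with hT
    have hsub : {ω | g ∈ Hfun s ω} ⊆ ⋂ θ ∈ T, s.X θ ⁻¹' {false} := by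
      intro ω hω
      simp only [Set.mem_iInter]
      intro θ hθ
      obtain ⟨i, _, rfl⟩ := Finset.mem_map.mp hθ
      have hfalse : s.X (e i) ω = false := by
        cases hx : s.X (e i) ω
        · rfl
        · exact absurd (mem_Hfun.mp hω _ hx) (heB i)
      simp [hfalse]
    have hind := s.indep.measure_inter_preimage_eq_mul T
      (sets := fun _ => {false}) (fun i _ => measurableSet_singleton false)
    calc s.P {ω | g ∈ Hfun s ω} ≤ s.P (⋂ θ ∈ T, s.X θ ⁻¹' {false}) := measure_mono hsub
      _ = ∏ θ ∈ T, s.P (s.X θ ⁻¹' {false}) := hind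
      _ = q ^ N := by
          rw [Finset.prod_congr rfl (fun θ _ => prob_X_false s θ)]
          simp [hT, hq]
  have htend := ENNReal.tendsto_pow_atTop_nhds_zero_of_lt_one hq1
  exact le_antisymm (ge_of_tendsto' htend key) (by simp)

lemma prob_not_mem_le {K : Subgroup G'} {p : ℝ} (s : BernoulliSetup K p) (hp : 0 ≤ p)
    {g : G'} (hfin : {θ : NormCoset K | g ∉ conjCoset K θ}.Finite) :
    s.P {ω | g ∉ Hfun s ω} ≤ ENNReal.ofReal (hfin.toFinset.card * p) := by
  letI := s.mΩ
  have hsub : {ω | g ∉ Hfun s ω} ⊆ ⋃ θ ∈ hfin.toFinset, {ω | s.X θ ω = true} := by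
    intro ω hω
    simp only [Set.mem_setOf_eq, mem_Hfun, not_forall] at hω
    obtain ⟨θ, hx, hθ⟩ := hω
    exact Set.mem_biUnion (hfin.mem_toFinset.mpr hθ) hx
  calc s.P {ω | g ∉ Hfun s ω}
      ≤ ∑ θ ∈ hfin.toFinset, s.P {ω | s.X θ ω = true} :=
        (measure_mono hsub).trans (measure_biUnion_finset_le (μ := s.P) _ _)
    _ = hfin.toFinset.card * ENNReal.ofReal p := by
        rw [Finset.sum_congr rfl (fun θ _ => s.bernoulli θ)]
        simp [Finset.sum_const, nsmul_eq_mul]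
    _ = ENNReal.ofReal (hfin.toFinset.card * p) := by
        rw [ENNReal.ofReal_mul (by positivity)]
        simp

lemma mem_emptyCore_iff_finite {K : Subgroup G'} {g : G'} :
    g ∈ emptyCore K ↔ {θ : NormCoset K | g ∉ conjCoset K θ}.Finite := by
  rw [mem_emptyCore, normOf, ← Set.encard_lt_top_iff]

lemma mem_normalCore_iff_forall {K : Subgroup G'} {g : G'} :
    g ∈ K.normalCore ↔ ∀ θ : NormCoset K, g ∈ conjCoset K θ := by
  constructor
  · intro h θ
    induction θ using Quotient.inductionOn with
    | h a =>
      rw [conjCoset_mk, mem_conjSubgroup, inv_inv]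
      exact h a
  · intro h b
    have := h (Quotient.mk (QuotientGroup.rightRel (Subgroup.normalizer (K : Set G'))) b)
    rw [conjCoset_mk, mem_conjSubgroup, inv_inv] at this
    exact this

set_option maxHeartbeats 1000000 in
/-- The key abstract convergence lemma: if the probability that the indicator of any
single group element differs between the random core and the candidate limit `H₀` is
eventually small, then the integrals converge. -/
lemma tendsto_integral_of_bad [Countable G'] {K : Subgroup G'}
    {ν : ℝ → Measure (Subgroup G')} {L : Filter ℝ}
    (hν : ∀ p ∈ Set.Ioo (0 : ℝ) 1, IsIntersectionalIRS K p (ν p))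
    (hL : ∀ᶠ p in L, p ∈ Set.Ioo (0 : ℝ) 1)
    {H₀ : Subgroup G'}
    (hbad : ∀ g : G', ∀ δ : ℝ, 0 < δ → ∀ᶠ p in L,
      ∀ (_ : p ∈ Set.Ioo (0 : ℝ) 1) (s : BernoulliSetup K p),
        s.P {ω | ¬ (g ∈ Hfun s ω ↔ g ∈ H₀)} ≤ ENNReal.ofReal δ)
    (f : BoundedContinuousFunction (Subgroup G') ℝ) :
    Tendsto (fun p => ∫ H, f H ∂(ν p)) L (𝓝 (f H₀)) := by
  rw [Metric.tendsto_nhds]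
  intro ε hε
  -- a basic neighborhood of `H₀` on which `f` is `ε/4` close to `f H₀`
  have hcont : {H : Subgroup G' | |f H - f H₀| < ε / 4} ∈ 𝓝 H₀ := by
    have := (f.continuous.tendsto H₀) (Metric.ball_mem_nhds (f H₀) (show (0:ℝ) < ε/4 by positivity))
    refine Filter.mem_of_superset this ?_
    intro H hH
    simpa [Real.dist_eq] using hH
  obtain ⟨V, hVb, hH₀V, hVsub⟩ := chabauty_basis.mem_nhds_iff.mp hcont
  obtain ⟨F, ⟨hFfin, hFsub⟩, rfl⟩ := hVb
  set n : ℕ := hFfin.toFinset.card with hn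
  set δ : ℝ := ε / (8 * (‖f‖ + 1) * (n + 1)) with hδ
  have hδpos : 0 < δ := by
    have h1 : (0:ℝ) < ‖f‖ + 1 := by positivity
    have h2 : (0:ℝ) < (n:ℝ) + 1 := by positivity
    positivity
  -- for each subbasic set in F, the bad probability is eventually small
  have hev : ∀ t ∈ hFfin.toFinset, ∀ᶠ p in L,
      ∀ (_ : p ∈ Set.Ioo (0 : ℝ) 1) (s : BernoulliSetup K p),
        s.P {ω | Hfun s ω ∉ t} ≤ ENNReal.ofReal δ := by
    intro t ht
    rw [hFfin.mem_toFinset] at ht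
    obtain ⟨g, hg⟩ := hFsub ht
    have hH₀t : H₀ ∈ t := hH₀V t ht
    filter_upwards [hbad g δ hδpos] with p hp hmem s
    have hseteq : {ω | Hfun s ω ∉ t} = {ω | ¬ (g ∈ Hfun s ω ↔ g ∈ H₀)} := by
      obtain rfl | rfl := hg
      · have hgH₀ : g ∈ H₀ := hH₀t
        ext ω; simp [hgH₀]
      · have hgH₀ : g ∉ H₀ := hH₀t
        ext ω; simp [hgH₀]
    rw [hseteq]
    exact hp hmem s
  rw [← Filter.eventually_all_finset] at hev
  filter_upwards [hev, hL] with p hp hmem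
  obtain ⟨hprob, s, hνp⟩ := hν p hmem
  letI := s.mΩ; haveI := s.prob
  -- rewrite the integral as an integral over the sample space
  have hfmeas : Measurable (f : Subgroup G' → ℝ) := measurable_of_continuous f.continuous
  have hHmeas := measurable_Hfun s
  have hint_eq : ∫ H, f H ∂(ν p) = ∫ ω, f (Hfun s ω) ∂s.P := by
    rw [hνp, law_eq_map]
    exact integral_map hHmeas.aemeasurable
      hfmeas.stronglyMeasurable.aestronglyMeasurable
  rw [hint_eq]
  -- the bad event
  set bad : Set s.Ω := {ω | Hfun s ω ∉ ⋂₀ F} with hbadset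
  have hbadmeas : MeasurableSet bad := by
    have hFmeas : MeasurableSet (⋂₀ F) :=
      hFfin.measurableSet_sInter fun u hu => measurableSet_subbasic (hFsub hu)
    exact hHmeas hFmeas.compl
  have hbadsub : bad ⊆ ⋃ t ∈ hFfin.toFinset, {ω | Hfun s ω ∉ t} := by
    intro ω hω
    simp only [hbadset, Set.mem_setOf_eq, Set.mem_sInter, not_forall] at hω
    obtain ⟨t, ht, hωt⟩ := hω
    exact Set.mem_biUnion (hFfin.mem_toFinset.mpr ht) hωt
  have hbadP : s.P bad ≤ ENNReal.ofReal (n * δ) := by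
    calc s.P bad ≤ ∑ t ∈ hFfin.toFinset, s.P {ω | Hfun s ω ∉ t} :=
          (measure_mono hbadsub).trans (measure_biUnion_finset_le (μ := s.P) _ _)
      _ ≤ ∑ _t ∈ hFfin.toFinset, ENNReal.ofReal δ :=
          Finset.sum_le_sum fun t ht => hp t ht hmem s
      _ = n * ENNReal.ofReal δ := by simp [hn, Finset.sum_const, nsmul_eq_mul]
      _ = ENNReal.ofReal (n * δ) := by
          rw [ENNReal.ofReal_mul (Nat.cast_nonneg n)]; simp
  have hbadreal : (s.P bad).toReal ≤ n * δ :=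
    ENNReal.toReal_le_of_le_ofReal (mul_nonneg (Nat.cast_nonneg n) hδpos.le) hbadP
  -- integrability
  have hg1meas : Measurable fun ω => f (Hfun s ω) := hfmeas.comp hHmeas
  have hg1int : Integrable (fun ω => f (Hfun s ω)) s.P := by
    refine Integrable.mono' (integrable_const ‖f‖)
      hg1meas.stronglyMeasurable.aestronglyMeasurable ?_
    exact Filter.Eventually.of_forall fun ω => f.norm_coe_le_norm _
  have hsubint : Integrable (fun ω => f (Hfun s ω) - f H₀) s.P :=
    hg1int.sub (integrable_const _)
  have hrhsint : Integrable (fun ω => ε / 4 + bad.indicator (fun _ => 2 * ‖f‖) ω) s.P :=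
    (integrable_const _).add ((integrable_const _).indicator hbadmeas)
  -- pointwise bound
  have hpt : ∀ ω, ‖f (Hfun s ω) - f H₀‖ ≤
      ε / 4 + bad.indicator (fun _ => 2 * ‖f‖) ω := by
    intro ω
    by_cases hω : ω ∈ bad
    · rw [Set.indicator_of_mem hω]
      have h1 : ‖f (Hfun s ω) - f H₀‖ ≤ ‖f (Hfun s ω)‖ + ‖f H₀‖ := norm_sub_le _ _
      have h2 : ‖f (Hfun s ω)‖ ≤ ‖f‖ := f.norm_coe_le_norm _
      have h3 : ‖f H₀‖ ≤ ‖f‖ := f.norm_coe_le_norm _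
      have hε4 : (0:ℝ) ≤ ε / 4 := by positivity
      linarith
    · rw [Set.indicator_of_notMem hω, add_zero]
      have hωV : Hfun s ω ∈ ⋂₀ F := not_not.mp hω
      have := hVsub hωV
      rw [Real.norm_eq_abs]
      exact this.le
  -- putting things together
  have hconst : ∫ _ω, f H₀ ∂s.P = f H₀ := by simp
  have hdiff : ∫ ω, f (Hfun s ω) ∂s.P - f H₀
      = ∫ ω, (f (Hfun s ω) - f H₀) ∂s.P := by
    rw [integral_sub hg1int (integrable_const _), integral_const]
    simp
  rw [Real.dist_eq, hdiff]
  have habs : |∫ ω, (f (Hfun s ω) - f H₀) ∂s.P| ≤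
      ∫ ω, ‖f (Hfun s ω) - f H₀‖ ∂s.P := by
    simpa [Real.norm_eq_abs] using norm_integral_le_integral_norm
      (fun ω => f (Hfun s ω) - f H₀) (μ := s.P)
  have hmono : ∫ ω, ‖f (Hfun s ω) - f H₀‖ ∂s.P ≤
      ∫ ω, (ε / 4 + bad.indicator (fun _ => 2 * ‖f‖) ω) ∂s.P :=
    integral_mono hsubint.norm hrhsint hpt
  have hrhs : ∫ ω, (ε / 4 + bad.indicator (fun _ => 2 * ‖f‖) ω) ∂s.P
      = ε / 4 + (s.P bad).toReal * (2 * ‖f‖) := by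
    rw [integral_add (integrable_const _) ((integrable_const _).indicator hbadmeas),
      integral_const, integral_indicator_const _ hbadmeas]
    simp [measureReal_def]
  have hfinal : ε / 4 + (s.P bad).toReal * (2 * ‖f‖) < ε := by
    have hP0 : (0:ℝ) ≤ (s.P bad).toReal := ENNReal.toReal_nonneg
    have hbound : (s.P bad).toReal * (2 * ‖f‖) ≤ (n * δ) * (2 * ‖f‖) := by
      have hf0 : (0:ℝ) ≤ 2 * ‖f‖ := by positivity
      exact mul_le_mul_of_nonneg_right hbadreal hf0
    have hnd : ((n:ℝ) * δ) * (2 * ‖f‖) ≤ ε / 4 := by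
      have hc : (0:ℝ) < 8 * (‖f‖ + 1) * ((n:ℝ) + 1) := by positivity
      have heq : ((n:ℝ) * (ε / (8 * (‖f‖ + 1) * ((n:ℝ) + 1)))) * (2 * ‖f‖)
          = ((n:ℝ) * ε * (2 * ‖f‖)) / (8 * (‖f‖ + 1) * ((n:ℝ) + 1)) := by ring
      rw [hδ, heq, div_le_div_iff₀ hc (by norm_num : (0:ℝ) < 4)]
      nlinarith [mul_nonneg hε.le (norm_nonneg f), mul_nonneg hε.le (Nat.cast_nonneg (α := ℝ) n),
        mul_nonneg (mul_nonneg hε.le (norm_nonneg f)) (Nat.cast_nonneg (α := ℝ) n), hε.le,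
        norm_nonneg f, Nat.cast_nonneg (α := ℝ) n]
    linarith
  calc |∫ ω, (f (Hfun s ω) - f H₀) ∂s.P|
      ≤ ∫ ω, ‖f (Hfun s ω) - f H₀‖ ∂s.P := habs
    _ ≤ ε / 4 + (s.P bad).toReal * (2 * ‖f‖) := hmono.trans_eq hrhs
    _ < ε := hfinal

end AuxProof

/-- **Proposition 2.2.** In the weak* topology, the intersectional IRSs `λ_{p,K}`
converge to `δ_{Core_∅(K)}` as `p → 0` and to `δ_{Core_G(K)}` as `p → 1`:
tested against any bounded continuous function `f` on `Sub(G)`, the integrals converge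
to the corresponding point evaluations. -/
theorem intersectional_IRS_weak_limits {G : Type*} [Group G] [Countable G]
    (K : Subgroup G) (ν : ℝ → Measure (Subgroup G))
    (hν : ∀ p ∈ Set.Ioo (0 : ℝ) 1, IsIntersectionalIRS K p (ν p)) :
    (∀ f : BoundedContinuousFunction (Subgroup G) ℝ,
      Tendsto (fun p => ∫ H, f H ∂(ν p)) (𝓝[Set.Ioo (0 : ℝ) 1] 0)
        (𝓝 (f (emptyCore K)))) ∧
    (∀ f : BoundedContinuousFunction (Subgroup G) ℝ,
      Tendsto (fun p => ∫ H, f H ∂(ν p)) (𝓝[Set.Ioo (0 : ℝ) 1] 1)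
        (𝓝 (f K.normalCore))) := by
  have hL0 : ∀ᶠ p in 𝓝[Set.Ioo (0 : ℝ) 1] (0:ℝ), p ∈ Set.Ioo (0 : ℝ) 1 :=
    eventually_mem_nhdsWithin
  have hL1 : ∀ᶠ p in 𝓝[Set.Ioo (0 : ℝ) 1] (1:ℝ), p ∈ Set.Ioo (0 : ℝ) 1 :=
    eventually_mem_nhdsWithin
  constructor
  · -- p → 0 : limit is `emptyCore K`
    intro f
    refine tendsto_integral_of_bad hν hL0 ?_ f
    intro g δ hδ
    by_cases hfin : {θ : NormCoset K | g ∉ conjCoset K θ}.Finite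
    · -- g ∈ emptyCore K
      have hgH₀ : g ∈ emptyCore K := mem_emptyCore_iff_finite.mpr hfin
      set n : ℕ := hfin.toFinset.card with hn
      have hevent : ∀ᶠ p in 𝓝[Set.Ioo (0 : ℝ) 1] (0:ℝ), p < δ / (n + 1) := by
        refine Filter.Eventually.filter_mono nhdsWithin_le_nhds ?_
        exact gt_mem_nhds (by positivity)
      filter_upwards [hevent, hL0] with p hplt hpmem _ s
      have hseteq : {ω | ¬ (g ∈ Hfun s ω ↔ g ∈ emptyCore K)} = {ω | g ∉ Hfun s ω} := by
        ext ω; simp [hgH₀]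
      rw [hseteq]
      refine (prob_not_mem_le s hpmem.1.le hfin).trans ?_
      apply ENNReal.ofReal_le_ofReal
      have hnp : (n:ℝ) * p ≤ (n + 1) * (δ / (n + 1)) := by
        have h1 : (0:ℝ) ≤ p := hpmem.1.le
        have h2 : (n:ℝ) ≤ n + 1 := by linarith
        have := mul_le_mul h2 hplt.le h1 (by positivity)
        linarith
      have heq : ((n:ℝ) + 1) * (δ / (n + 1)) = δ := by
        field_simp
      rw [← hn]
      linarith [hnp, heq ▸ hnp]
    · -- g ∉ emptyCore K
      have hgH₀ : g ∉ emptyCore K := fun h => hfin (mem_emptyCore_iff_finite.mp h)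
      filter_upwards [hL0] with p hpmem _ s
      have hseteq : {ω | ¬ (g ∈ Hfun s ω ↔ g ∈ emptyCore K)} = {ω | g ∈ Hfun s ω} := by
        ext ω; simp [hgH₀]
      rw [hseteq, prob_mem_zero s hpmem.1 hfin]
      exact (by simp)
  · -- p → 1 : limit is `K.normalCore`
    intro f
    refine tendsto_integral_of_bad hν hL1 ?_ f
    intro g δ hδ
    by_cases hg : g ∈ K.normalCore
    · filter_upwards [hL1] with p _ _ s
      have hseteq : {ω | ¬ (g ∈ Hfun s ω ↔ g ∈ K.normalCore)} = (∅ : Set s.Ω) := by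
        ext ω
        have : g ∈ Hfun s ω := mem_Hfun.mpr fun θ _ =>
          mem_normalCore_iff_forall.mp hg θ
        simp [this, hg]
      rw [hseteq]
      simp
    · obtain ⟨θ₀, hθ₀⟩ : ∃ θ : NormCoset K, g ∉ conjCoset K θ := by
        by_contra h
        push_neg at h
        exact hg (mem_normalCore_iff_forall.mpr h)
      have hevent : ∀ᶠ p in 𝓝[Set.Ioo (0 : ℝ) 1] (1:ℝ), 1 - δ < p := by
        refine Filter.Eventually.filter_mono nhdsWithin_le_nhds ?_
        exact lt_mem_nhds (by linarith)
      filter_upwards [hevent, hL1] with p hplt hpmem _ s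
      have hseteq : {ω | ¬ (g ∈ Hfun s ω ↔ g ∈ K.normalCore)} = {ω | g ∈ Hfun s ω} := by
        ext ω; simp [hg]
      rw [hseteq]
      have hsub : {ω | g ∈ Hfun s ω} ⊆ s.X θ₀ ⁻¹' {false} := by
        intro ω hω
        have hfalse : s.X θ₀ ω = false := by
          cases hx : s.X θ₀ ω
          · rfl
          · exact absurd (mem_Hfun.mp hω θ₀ hx) hθ₀
        simp [hfalse]
      calc s.P {ω | g ∈ Hfun s ω} ≤ s.P (s.X θ₀ ⁻¹' {false}) := measure_mono hsub
        _ = 1 - ENNReal.ofReal p := prob_X_false s θ₀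
        _ = ENNReal.ofReal (1 - p) := by
            rw [ENNReal.ofReal_sub _ hpmem.1.le, ENNReal.ofReal_one]
        _ ≤ ENNReal.ofReal δ := ENNReal.ofReal_le_ofReal (by linarith)

end Paper
end
end

section
/- Let G be a countable group, K ≤ G a subgroup, and p ∈ (0,1). Then for every g ∈ G, λ_{p,K}({H ∈ Sub(G) : g ∈ H}) = (1−p)^{‖g‖_K}, with the convention (1−p)^∞ = 0. -/
open Filter MeasureTheory
open scoped ENNReal Topology

noncomputable section

namespace Paper

variable {G : Type*} [Group G]

variable {G₀ : Type*} [Group G₀]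

/-- `(1 - p) ^ m` for `m ∈ ℕ ∪ {∞}`, with the convention `x ^ ∞ = 0`. -/
def enatPow (x : ℝ) (m : ℕ∞) : ℝ := if m = ⊤ then 0 else x ^ m.toNat

/-- **Proposition 2.2 (displayed identity).** For the intersectional IRS `λ_{p,K}`,
`λ_{p,K}({H : g ∈ H}) = (1-p)^{‖g‖_K}`, with `(1-p)^∞ = 0`. -/
theorem intersectional_IRS_cylinder {G : Type*} [Group G] [Countable G]
    (K : Subgroup G) (p : ℝ) (hp : p ∈ Set.Ioo (0 : ℝ) 1)
    (ν : Measure (Subgroup G)) (hν : IsIntersectionalIRS K p ν) (g : G) :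
    ν {H : Subgroup G | g ∈ H} = ENNReal.ofReal (enatPow (1 - p) (normOf K g)) := by
  obtain ⟨hprob, s, rfl⟩ := hν
  obtain ⟨hp0, hp1⟩ := hp
  letI : MeasurableSpace s.Ω := s.mΩ
  haveI : IsProbabilityMeasure s.P := s.prob
  set f : s.Ω → Subgroup G :=
    fun ω => ⨅ θ ∈ {θ | s.X θ ω = true}, conjCoset K θ with hf_def
  -- description of preimages of cylinders
  have hpre : ∀ x : G, f ⁻¹' {H : Subgroup G | x ∈ H} =
      ⋂ θ ∈ {θ : NormCoset K | x ∉ conjCoset K θ}, {ω | s.X θ ω = false} := by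
    intro x
    ext ω
    simp only [Set.mem_preimage, Set.mem_setOf_eq, hf_def, Subgroup.mem_iInf,
      Set.mem_iInter]
    constructor
    · intro h θ hθ
      cases hb : s.X θ ω with
      | false => rfl
      | true => exact absurd (h θ hb) hθ
    · intro h θ hθ
      by_contra hc
      rw [h θ hc] at hθ
      exact Bool.false_ne_true hθ
  have hXfalse : ∀ θ : NormCoset K,
      MeasurableSet {ω | s.X θ ω = false} :=
    fun θ => (s.meas θ) (measurableSet_singleton false)
  have hf : Measurable f := by
    apply measurable_generateFrom
    rintro _ ⟨x, rfl⟩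
    rw [hpre x]
    exact MeasurableSet.biInter (Set.to_countable _) (fun θ _ => hXfalse θ)
  have hcyl : MeasurableSet {H : Subgroup G | g ∈ H} :=
    MeasurableSpace.measurableSet_generateFrom ⟨g, rfl⟩
  set S : Set (NormCoset K) := {θ : NormCoset K | g ∉ conjCoset K θ} with hS
  have hmap : s.law {H : Subgroup G | g ∈ H} =
      s.P (⋂ θ ∈ S, {ω | s.X θ ω = false}) := by
    rw [BernoulliSetup.law, Measure.map_apply hf hcyl, hpre g]
  -- single event probability
  have hone : ∀ θ : NormCoset K, s.P {ω | s.X θ ω = false} = ENNReal.ofReal (1 - p) := by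
    intro θ
    have hc : {ω | s.X θ ω = false} = {ω | s.X θ ω = true}ᶜ := by
      ext ω
      simp [Bool.not_eq_true]
    rw [hc, prob_compl_eq_one_sub (show MeasurableSet {ω | s.X θ ω = true} from (s.meas θ) (measurableSet_singleton true)),
      s.bernoulli θ, ENNReal.ofReal_sub 1 hp0.le, ENNReal.ofReal_one]
  -- finite intersections
  have hfin : ∀ T : Finset (NormCoset K),
      s.P (⋂ θ ∈ T, {ω | s.X θ ω = false}) = ENNReal.ofReal (1 - p) ^ T.card := by
    intro T
    have hind := s.indep.measure_inter_preimage_eq_mul T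
      (sets := fun _ => ({false} : Set Bool))
      (fun i _ => measurableSet_singleton false)
    have hpe : ∀ θ : NormCoset K, s.X θ ⁻¹' ({false} : Set Bool) =
        {ω | s.X θ ω = false} := by
      intro θ; ext ω; simp
    simp only [hpe] at hind
    rw [hind]
    simp [hone]
  rcases Set.finite_or_infinite S with hSf | hSf
  · -- finite case
    have hnorm : normOf K g = (hSf.toFinset.card : ℕ∞) := by
      rw [normOf, ← hS, Set.Finite.encard_eq_coe_toFinset_card hSf]
    have hiface : (⋂ θ ∈ S, {ω | s.X θ ω = false}) =
        ⋂ θ ∈ hSf.toFinset, {ω | s.X θ ω = false} := by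
      ext θ
      simp
    rw [hmap, hiface, hfin, hnorm, enatPow]
    have hne : ((hSf.toFinset.card : ℕ∞)) ≠ ⊤ := by
      exact_mod_cast WithTop.coe_ne_top
    rw [if_neg hne]
    have : ((hSf.toFinset.card : ℕ∞)).toNat = hSf.toFinset.card := rfl
    rw [this, ENNReal.ofReal_pow (by linarith)]
  · -- infinite case
    have hnorm : normOf K g = ⊤ := hSf.encard_eq
    rw [hnorm, enatPow, if_pos rfl, ENNReal.ofReal_zero, hmap]
    have hle : ∀ n : ℕ, s.P (⋂ θ ∈ S, {ω | s.X θ ω = false}) ≤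
        ENNReal.ofReal ((1 - p) ^ n) := by
      intro n
      obtain ⟨T, hTS, hTcard⟩ := hSf.exists_subset_card_eq n
      have hsub : (⋂ θ ∈ S, {ω | s.X θ ω = false}) ⊆
          ⋂ θ ∈ T, {ω | s.X θ ω = false} := by
        have := Set.biInter_subset_biInter_left
          (t := fun θ => {ω | s.X θ ω = false}) hTS
        intro ω hω
        have hω' := this hω
        simp only [Set.mem_iInter, Finset.mem_coe] at hω' ⊢
        exact hω'
      calc s.P (⋂ θ ∈ S, {ω | s.X θ ω = false})
          ≤ s.P (⋂ θ ∈ T, {ω | s.X θ ω = false}) := measure_mono hsub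
        _ = ENNReal.ofReal (1 - p) ^ T.card := hfin T
        _ = ENNReal.ofReal ((1 - p) ^ n) := by
            rw [hTcard, ENNReal.ofReal_pow (by linarith)]
    have htend : Tendsto (fun n : ℕ => ENNReal.ofReal ((1 - p) ^ n)) atTop
        (𝓝 (ENNReal.ofReal 0)) := by
      apply ENNReal.tendsto_ofReal
      apply tendsto_pow_atTop_nhds_zero_of_lt_one (by linarith) (by linarith)
    rw [ENNReal.ofReal_zero] at htend
    have h0 := ge_of_tendsto' htend hle
    exact le_antisymm h0 zero_le

end Paper
end
end
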